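/- Let x, y ∈ ℂ⁴ be linearly independent and z, w ∈ ℂ⁴ be linearly independent. Let P be the primal Plücker matrix of (x,y) and let Q* := z wᵀ − w zᵀ be the dual Plücker matrix of (z,w). Then trace(P Q*) = 0 if and only if the two lines span{x,y} and span{z,w} have nontrivial intersection, i.e., span{x,y} ∩ span{z,w} ≠ {0}. -/

import Mathlib

open Matrix

/-- The primal Plücker matrix of a pair of vectors `x y : ℂ⁴`:
the skew-symmetric matrix with above-diagonal entries
`P₀₁ = p₂₃, P₀₂ = −p₁₃, P₀₃ = p₁₂, P₁₂ = p₀₃, P₁₃ = −p₀₂, P₂₃ = p₀₁`,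
where `p_{ij} = x_i y_j − x_j y_i`. -/
noncomputable def primalMat (x y : Fin 4 → ℂ) : Matrix (Fin 4) (Fin 4) ℂ :=
  !![0, x 2 * y 3 - x 3 * y 2, -(x 1 * y 3 - x 3 * y 1), x 1 * y 2 - x 2 * y 1;
     -(x 2 * y 3 - x 3 * y 2), 0, x 0 * y 3 - x 3 * y 0, -(x 0 * y 2 - x 2 * y 0);
     x 1 * y 3 - x 3 * y 1, -(x 0 * y 3 - x 3 * y 0), 0, x 0 * y 1 - x 1 * y 0;
     -(x 1 * y 2 - x 2 * y 1), x 0 * y 2 - x 2 * y 0, -(x 0 * y 1 - x 1 * y 0), 0]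

/-- The dual Plücker matrix of a pair of vectors `z w : ℂ⁴`, namely `z wᵀ − w zᵀ`. -/
noncomputable def dualMat (z w : Fin 4 → ℂ) : Matrix (Fin 4) (Fin 4) ℂ :=
  Matrix.of fun i j => z i * w j - z j * w i

lemma det_of_four (x y z w : Fin 4 → ℂ) : (Matrix.of ![x, y, z, w]).det =
    x 0 * (y 1 * z 2 * w 3) - x 0 * (y 1 * z 3 * w 2) - x 0 * (y 2 * z 1 * w 3)
    + x 0 * (y 2 * z 3 * w 1) + x 0 * (y 3 * z 1 * w 2) - x 0 * (y 3 * z 2 * w 1)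
    - x 1 * (y 0 * z 2 * w 3) + x 1 * (y 0 * z 3 * w 2) + x 1 * (y 2 * z 0 * w 3)
    - x 1 * (y 2 * z 3 * w 0) - x 1 * (y 3 * z 0 * w 2) + x 1 * (y 3 * z 2 * w 0)
    + x 2 * (y 0 * z 1 * w 3) - x 2 * (y 0 * z 3 * w 1) - x 2 * (y 1 * z 0 * w 3)
    + x 2 * (y 1 * z 3 * w 0) + x 2 * (y 3 * z 0 * w 1) - x 2 * (y 3 * z 1 * w 0)
    - x 3 * (y 0 * z 1 * w 2) + x 3 * (y 0 * z 2 * w 1) + x 3 * (y 1 * z 0 * w 2)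
    - x 3 * (y 1 * z 2 * w 0) - x 3 * (y 2 * z 0 * w 1) + x 3 * (y 2 * z 1 * w 0) := by
  rw [Matrix.det_succ_row_zero]
  simp [Fin.sum_univ_succ, Matrix.det_fin_three, Fin.succAbove,
    show Fin.succ 2 = (3:Fin 4) from rfl, show Fin.castSucc 2 = (2:Fin 4) from rfl]
  ring

lemma trace_eq_det (x y z w : Fin 4 → ℂ) :
    (primalMat x y * dualMat z w).trace =
      -2 * (Matrix.of ![x, y, z, w]).det := by
  rw [det_of_four]
  simp [Matrix.trace, Matrix.diag, Matrix.mul_apply, Fin.sum_univ_four,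
    primalMat, dualMat]
  ring

lemma coeffs_zero {x y : Fin 4 → ℂ} (hxy : LinearIndependent ℂ ![x, y])
    {a b : ℂ} (h : a • x + b • y = 0) : a = 0 ∧ b = 0 := by
  have h2 : ∑ i, ![a, b] i • ![x, y] i = 0 := by
    simp [Fin.sum_univ_two, h]
  have := Fintype.linearIndependent_iff.mp hxy ![a, b] h2
  exact ⟨this 0, this 1⟩

lemma not_li_iff (x y z w : Fin 4 → ℂ)
    (hxy : LinearIndependent ℂ ![x, y]) (hzw : LinearIndependent ℂ ![z, w]) :
    ¬ LinearIndependent ℂ ![x, y, z, w] ↔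
      Submodule.span ℂ {x, y} ⊓ Submodule.span ℂ {z, w} ≠ ⊥ := by
  rw [Fintype.not_linearIndependent_iff]
  constructor
  · rintro ⟨g, hg, i, hi⟩
    simp only [Fin.sum_univ_four, Matrix.cons_val_zero, Matrix.cons_val_one, Matrix.head_cons,
      Matrix.cons_val_two, Matrix.tail_cons, Matrix.cons_val_three, Matrix.head_fin_const] at hg
    have h2 : g 0 • x + g 1 • y = (-g 2) • z + (-g 3) • w := by
      simp only [neg_smul]
      have : g 0 • x + g 1 • y + (g 2 • z + g 3 • w) = 0 := by rw [← hg]; abel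
      have h3 := eq_neg_of_add_eq_zero_left this
      rw [h3, neg_add]
    intro hbot
    have hv : g 0 • x + g 1 • y ∈
        Submodule.span ℂ {x, y} ⊓ Submodule.span ℂ {z, w} :=
      ⟨Submodule.mem_span_pair.2 ⟨g 0, g 1, rfl⟩,
       Submodule.mem_span_pair.2 ⟨-g 2, -g 3, h2.symm⟩⟩
    rw [hbot, Submodule.mem_bot] at hv
    obtain ⟨h01, h01'⟩ := coeffs_zero hxy hv
    have hzw0 : (-g 2) • z + (-g 3) • w = 0 := by rw [← h2, hv]
    obtain ⟨h23, h23'⟩ := coeffs_zero hzw hzw0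
    have h23 : g 2 = 0 := by simpa using h23
    have h23' : g 3 = 0 := by simpa using h23'
    fin_cases i <;> simp_all
  · intro hne
    obtain ⟨v, hv, hv0⟩ := Submodule.ne_bot_iff _ |>.mp hne
    obtain ⟨hv1, hv2⟩ := hv
    obtain ⟨a, b, hab⟩ := Submodule.mem_span_pair.1 hv1
    obtain ⟨c, d, hcd⟩ := Submodule.mem_span_pair.1 hv2
    refine ⟨![a, b, -c, -d], ?_, ?_⟩
    · simp only [Fin.sum_univ_four, Matrix.cons_val_zero, Matrix.cons_val_one, Matrix.head_cons,
        Matrix.cons_val_two, Matrix.tail_cons, Matrix.cons_val_three, Matrix.head_fin_const,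
        neg_smul]
      rw [hab]
      have : v - (c • z + d • w) = 0 := by rw [hcd]; abel
      calc v + -(c • z) + -(d • w) = v - (c • z + d • w) := by abel
        _ = 0 := this
    · have hab0 : a ≠ 0 ∨ b ≠ 0 := by
        by_contra h
        push_neg at h
        apply hv0
        rw [← hab, h.1, h.2]
        simp
      rcases hab0 with h | h
      · exact ⟨0, by simpa using h⟩
      · exact ⟨1, by simpa using h⟩

/-- `trace (P Q*) = 0` iff the two lines `span{x,y}` and `span{z,w}` meet. -/
theorem trace_primal_dual_eq_zero_iff_lines_meet
    (x y z w : Fin 4 → ℂ)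
    (hxy : LinearIndependent ℂ ![x, y]) (hzw : LinearIndependent ℂ ![z, w]) :
    (primalMat x y * dualMat z w).trace = 0 ↔
      Submodule.span ℂ {x, y} ⊓ Submodule.span ℂ {z, w} ≠ ⊥ := by
  rw [trace_eq_det, ← not_li_iff x y z w hxy hzw]
  have hrows : ¬ LinearIndependent ℂ ![x, y, z, w] ↔
      (Matrix.of ![x, y, z, w]).det = 0 := by
    rw [show (¬ LinearIndependent ℂ ![x, y, z, w]) ↔
        ¬ LinearIndependent ℂ (Matrix.of ![x, y, z, w]).row from Iff.rfl,
      Matrix.linearIndependent_rows_iff_isUnit, Matrix.isUnit_iff_isUnit_det,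
      isUnit_iff_ne_zero, not_not]
  rw [hrows, mul_eq_zero]
  simp
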